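/- Let the constants range over ℤ and let the term language contain standard integer polynomial arithmetic (+, ×, integer constants) with the interpreted relation =. Let D(x₁,…,xₙ) be a finite system of polynomial equations in variables x₁,…,xₙ, let ψ(x₁,…,xₙ) be the conjunction of the equations of D, let p₁,…,pₙ be distinct unary uninterpreted predicates, and let h be the po-history consisting of the single po-session {p₁(x₁),…,pₙ(xₙ)} with x₁,…,xₙ distinct variables. Then h potentially satisfies the closed formula ∃x₁:p₁. ⋯ ∃xₙ:pₙ. ψ(x₁,…,xₙ) at index 1 if and only if D has an integer solution. -/

import Mathlib

/-- Terms: variables, constants, and applications of interpreted function symbols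
(function symbols are named by natural numbers). -/
inductive Tm (C : Type) : Type where
  | var : ℕ → Tm C
  | const : C → Tm C
  | func : ℕ → List (Tm C) → Tm C

/-- Evaluation of a term under an interpretation `F` of the function symbols and an
environment (variable assignment) `ρ`. -/
def Tm.eval {C : Type} (F : ℕ → List C → C) (ρ : ℕ → C) : Tm C → C
  | .var x => ρ x
  | .const c => c
  | .func f args => F f (args.attach.map fun t => Tm.eval F ρ t.1)
  decreasing_by simp_wf; have := List.sizeOf_lt_of_mem t.2; omega

/-- Variables occurring in a term. -/
def Tm.fv {C : Type} : Tm C → List ℕ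
  | .var x => [x]
  | .const _ => []
  | .func _ args => args.attach.flatMap fun t => Tm.fv t.1
  decreasing_by simp_wf; have := List.sizeOf_lt_of_mem t.2; omega

/-- PTLTL^FO formulas: uninterpreted predicate atoms, interpreted relation atoms,
conjunction, negation, "previous" X⁻¹, "since" S, and the guarded universal
quantifier `all xs p ψ` (∀(x₁,…,xₙ):p. ψ). -/
inductive Fm (C : Type) : Type where
  | atom : ℕ → List (Tm C) → Fm C
  | rel : ℕ → List (Tm C) → Fm C
  | and : Fm C → Fm C → Fm C
  | not : Fm C → Fm C
  | prev : Fm C → Fm C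
  | since : Fm C → Fm C → Fm C
  | all : List ℕ → ℕ → Fm C → Fm C

/-- Free variables of a formula. -/
def Fm.fv {C : Type} : Fm C → List ℕ
  | .atom _ ts => ts.flatMap Tm.fv
  | .rel _ ts => ts.flatMap Tm.fv
  | .and a b => a.fv ++ b.fv
  | .not a => a.fv
  | .prev a => a.fv
  | .since a b => a.fv ++ b.fv
  | .all xs _ a => a.fv.filter (fun v => v ∉ xs)

/-- A formula is closed if it has no free variables. -/
def Fm.Closed {C : Type} (φ : Fm C) : Prop := φ.fv = []

/-- A session is a finite set of events `p(c₁,…,cₙ)`. -/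
abbrev Session (C : Type) := Finset (ℕ × List C)

/-- A history is a (finite) list of sessions. -/
abbrev History (C : Type) := List (Session C)

/-- Update an environment on the list of variables `xs` with the list of values `cs`. -/
def updEnv {C : Type} (ρ : ℕ → C) (xs : List ℕ) (cs : List C) : ℕ → C :=
  fun v => ((xs.zip cs).lookup v).getD (ρ v)

/-- The forcing relation `(h,i) ⊨ φ` (1-based session index `i`, environment `ρ`),
with interpretation `F` of function symbols and `R` of relation symbols. -/
def Sat {C : Type} (F : ℕ → List C → C) (R : ℕ → List C → Bool) (h : History C) :
    ℕ → (ℕ → C) → Fm C → Prop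
  | i, ρ, .atom p ts => (p, ts.map (Tm.eval F ρ)) ∈ h.getD (i - 1) ∅
  | i, ρ, .rel r ts => R r (ts.map (Tm.eval F ρ)) = true
  | i, ρ, .and a b => Sat F R h i ρ a ∧ Sat F R h i ρ b
  | i, ρ, .not a => ¬ Sat F R h i ρ a
  | i, ρ, .prev a => 1 < i ∧ Sat F R h (i - 1) ρ a
  | i, ρ, .since a b =>
      ∃ j, 1 ≤ j ∧ j ≤ i ∧ Sat F R h j ρ b ∧ ∀ k, j < k → k ≤ i → Sat F R h k ρ a
  | i, ρ, .all xs p a =>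
      ∀ cs : List C, cs.length = xs.length → (p, cs) ∈ h.getD (i - 1) ∅ →
        Sat F R h i (updEnv ρ xs cs) a

/-- A partially observable session: a finite set of atoms `p(u₁,…,uₙ)` where each
argument is either a variable (`Sum.inl`) or a constant (`Sum.inr`). -/
abbrev PoSession (C : Type) := Finset (ℕ × List (ℕ ⊕ C))

/-- A partially observable history. -/
abbrev PoHistory (C : Type) := List (PoSession C)

/-- Applying a substitution `σ` to a po-history yields an ordinary history. -/
def applySub {C : Type} [DecidableEq C] (σ : ℕ → C) (h : PoHistory C) : History C :=
  h.map fun s => s.image fun e => (e.1, e.2.map (Sum.elim σ id))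

/-- `h` potentially satisfies the closed formula `ψ` at `i`: some substitution for the
unknowns of `h` makes `ψ` true at `(hσ, i)`. -/
def PotSat {C : Type} [DecidableEq C] (F : ℕ → List C → C) (R : ℕ → List C → Bool)
    (h : PoHistory C) (i : ℕ) (ψ : Fm C) : Prop :=
  ∃ σ : ℕ → C, ∀ ρ : ℕ → C, Sat F R (applySub σ h) i ρ ψ

/-- `h` adheres to the closed formula `ψ` at `i`: every substitution for the unknowns of
`h` makes `ψ` true at `(hσ, i)`. -/
def Adheres {C : Type} [DecidableEq C] (F : ℕ → List C → C) (R : ℕ → List C → Bool)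
    (h : PoHistory C) (i : ℕ) (ψ : Fm C) : Prop :=
  ∀ σ : ℕ → C, ∀ ρ : ℕ → C, Sat F R (applySub σ h) i ρ ψ

/-- Syntactic polynomial terms over variables `x₁,…,xₙ`: built from the variables
`x₁,…,xₙ`, integer constants, and the interpreted function symbols `0` (addition) and
`1` (multiplication), both binary. -/
inductive IsPolyTm (n : ℕ) : Tm ℤ → Prop where
  | var : ∀ x, 1 ≤ x → x ≤ n → IsPolyTm n (.var x)
  | const : ∀ c : ℤ, IsPolyTm n (.const c)
  | add : ∀ s t, IsPolyTm n s → IsPolyTm n t → IsPolyTm n (.func 0 [s, t])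
  | mul : ∀ s t, IsPolyTm n s → IsPolyTm n t → IsPolyTm n (.func 1 [s, t])

/-- The equation `s = t` as a formula (`=` is the interpreted relation symbol `0`). -/
def eqFm (e : Tm ℤ × Tm ℤ) : Fm ℤ := .rel 0 [e.1, e.2]

/-- The conjunction `ψ(x₁,…,xₙ)` of the equations of the system `e :: es`. -/
def conjFm (e : Tm ℤ × Tm ℤ) (es : List (Tm ℤ × Tm ℤ)) : Fm ℤ :=
  (es.map eqFm).foldl .and (eqFm e)

/-- `∃x:p.ψ := ¬∀x:p.¬ψ`. -/
def exQ (x p : ℕ) (a : Fm ℤ) : Fm ℤ := .not (.all [x] p (.not a))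

/-- Prefix the formula `a` with `∃x₁:p₁. ⋯ ∃x_k:p_k.` (predicate `pᵢ` is predicate
symbol `i`, variable `xᵢ` is variable `i`). -/
def exPrefix : ℕ → Fm ℤ → Fm ℤ
  | 0, a => a
  | k + 1, a => exPrefix k (exQ (k + 1) (k + 1) a)

/-- The po-history consisting of the single po-session `{p₁(x₁),…,pₙ(xₙ)}`. -/
def dioHistory (n : ℕ) : PoHistory ℤ :=
  [(Finset.Icc 1 n).image fun k => (k, [Sum.inl k])]

lemma eval_func2 {C : Type} (F : ℕ → List C → C) (ρ : ℕ → C) (f : ℕ) (s t : Tm C) :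
    Tm.eval F ρ (.func f [s, t]) = F f [Tm.eval F ρ s, Tm.eval F ρ t] := by
  rw [Tm.eval]; simp

lemma eval_poly_congr {n : ℕ} (F : ℕ → List ℤ → ℤ) {t : Tm ℤ} (ht : IsPolyTm n t)
    {ρ ρ' : ℕ → ℤ} (h : ∀ v, 1 ≤ v → v ≤ n → ρ v = ρ' v) :
    Tm.eval F ρ t = Tm.eval F ρ' t := by
  induction ht with
  | var x h1 h2 => rw [Tm.eval, Tm.eval]; exact h x h1 h2
  | const c => rw [Tm.eval, Tm.eval]
  | add s t hs hts ihs iht => rw [eval_func2, eval_func2, ihs, iht]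
  | mul s t hs hts ihs iht => rw [eval_func2, eval_func2, ihs, iht]

lemma mem_dio (σ : ℕ → ℤ) (n p : ℕ) (cs : List ℤ) :
    ((p, cs) ∈ (applySub σ (dioHistory n)).getD 0 ∅) ↔ (1 ≤ p ∧ p ≤ n ∧ cs = [σ p]) := by
  simp only [applySub, dioHistory, List.map_cons, List.map_nil, List.getD_cons_zero,
    Finset.mem_image, Finset.mem_Icc]
  constructor
  · rintro ⟨a, ⟨k, hk, rfl⟩, h⟩
    simp only [List.map_cons, List.map_nil, Sum.elim_inl, Prod.mk.injEq] at h
    obtain ⟨rfl, rfl⟩ := h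
    exact ⟨hk.1, hk.2, rfl⟩
  · rintro ⟨h1, h2, rfl⟩
    exact ⟨(p, [Sum.inl p]), ⟨p, ⟨h1, h2⟩, rfl⟩, rfl⟩

lemma updEnv_single {C : Type} (ρ : ℕ → C) (k : ℕ) (c : C) :
    updEnv ρ [k] [c] = fun v => if v = k then c else ρ v := by
  funext v
  simp only [updEnv, List.zip_cons_cons, List.zip_nil_right, List.lookup]
  by_cases h : v = k
  · simp [h]
  · simp [h, Ne.symm h, beq_false_of_ne h]

lemma sat_exQ (F : ℕ → List ℤ → ℤ) (R : ℕ → List ℤ → Bool) (σ : ℕ → ℤ) (n k : ℕ)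
    (hk1 : 1 ≤ k) (hk2 : k ≤ n) (ρ : ℕ → ℤ) (a : Fm ℤ) :
    Sat F R (applySub σ (dioHistory n)) 1 ρ (exQ k k a) ↔
      Sat F R (applySub σ (dioHistory n)) 1 (updEnv ρ [k] [σ k]) a := by
  show (¬ ∀ cs : List ℤ, cs.length = [k].length →
      (k, cs) ∈ (applySub σ (dioHistory n)).getD (1 - 1) ∅ →
      ¬ Sat F R (applySub σ (dioHistory n)) 1 (updEnv ρ [k] cs) a) ↔ _
  constructor
  · intro h
    by_contra hc
    apply h
    intro cs _ hmem
    obtain ⟨-, -, rfl⟩ := (mem_dio σ n k cs).mp hmem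
    exact hc
  · intro h hall
    exact hall [σ k] rfl ((mem_dio σ n k _).mpr ⟨hk1, hk2, rfl⟩) h

lemma sat_exPrefix (F : ℕ → List ℤ → ℤ) (R : ℕ → List ℤ → Bool) (σ : ℕ → ℤ) (n : ℕ)
    (a : Fm ℤ) : ∀ k, k ≤ n → ∀ ρ : ℕ → ℤ,
    (Sat F R (applySub σ (dioHistory n)) 1 ρ (exPrefix k a) ↔
      Sat F R (applySub σ (dioHistory n)) 1
        (fun v => if 1 ≤ v ∧ v ≤ k then σ v else ρ v) a) := by
  intro k
  induction k generalizing a with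
  | zero =>
    intro _ ρ
    have : (fun v => if 1 ≤ v ∧ v ≤ 0 then σ v else ρ v) = ρ := by
      funext v; rw [if_neg]; omega
    rw [this]; rfl
  | succ k ih =>
    intro hk ρ
    rw [show exPrefix (k+1) a = exPrefix k (exQ (k+1) (k+1) a) from rfl,
      ih _ (by omega) ρ, sat_exQ F R σ n (k+1) (by omega) hk, updEnv_single]
    have : (fun v => if v = k + 1 then σ (k+1)
        else if 1 ≤ v ∧ v ≤ k then σ v else ρ v)
        = fun v => if 1 ≤ v ∧ v ≤ k + 1 then σ v else ρ v := by
      funext v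
      by_cases h : v = k + 1
      · subst h; rw [if_pos rfl, if_pos (by omega)]
      · rw [if_neg h]
        by_cases h2 : 1 ≤ v ∧ v ≤ k
        · rw [if_pos h2, if_pos (by omega)]
        · rw [if_neg h2, if_neg (by omega)]
    rw [this]

lemma sat_foldl (F : ℕ → List ℤ → ℤ) (R : ℕ → List ℤ → Bool) (h : History ℤ)
    (ρ : ℕ → ℤ) (b : Fm ℤ) (l : List (Fm ℤ)) :
    Sat F R h 1 ρ (l.foldl .and b) ↔
      (Sat F R h 1 ρ b ∧ ∀ c ∈ l, Sat F R h 1 ρ c) := by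
  induction l generalizing b with
  | nil => simp
  | cons c l ihl =>
    rw [List.foldl_cons, ihl]
    have : Sat F R h 1 ρ (.and b c) ↔ (Sat F R h 1 ρ b ∧ Sat F R h 1 ρ c) := Iff.rfl
    simp only [List.mem_cons, this]
    constructor
    · rintro ⟨⟨hb, hc⟩, hl⟩
      exact ⟨hb, fun d hd => hd.elim (fun h => h ▸ hc) (hl d)⟩
    · rintro ⟨hb, hl⟩
      exact ⟨⟨hb, hl c (Or.inl rfl)⟩, fun d hd => hl d (Or.inr hd)⟩

lemma sat_eqFm (F : ℕ → List ℤ → ℤ) (R : ℕ → List ℤ → Bool)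
    (heq : ∀ a b : ℤ, R 0 [a, b] = true ↔ a = b) (h : History ℤ) (ρ : ℕ → ℤ)
    (d : Tm ℤ × Tm ℤ) :
    Sat F R h 1 ρ (eqFm d) ↔ Tm.eval F ρ d.1 = Tm.eval F ρ d.2 := by
  show R 0 ([d.1, d.2].map (Tm.eval F ρ)) = true ↔ _
  simp only [List.map_cons, List.map_nil]
  exact heq _ _

lemma sat_conj (F : ℕ → List ℤ → ℤ) (R : ℕ → List ℤ → Bool)
    (heq : ∀ a b : ℤ, R 0 [a, b] = true ↔ a = b) (h : History ℤ) (ρ : ℕ → ℤ)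
    (e : Tm ℤ × Tm ℤ) (es : List (Tm ℤ × Tm ℤ)) :
    Sat F R h 1 ρ (conjFm e es) ↔
      ∀ d ∈ e :: es, Tm.eval F ρ d.1 = Tm.eval F ρ d.2 := by
  rw [conjFm, sat_foldl, sat_eqFm F R heq]
  constructor
  · rintro ⟨he, hl⟩ d hd
    rcases List.mem_cons.mp hd with hd | hd
    · exact hd ▸ he
    · exact (sat_eqFm F R heq h ρ d).mp (hl _ (List.mem_map_of_mem hd))
  · intro hall
    refine ⟨hall e (List.mem_cons_self), ?_⟩
    intro c hc
    obtain ⟨d, hd, rfl⟩ := List.mem_map.mp hc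
    exact (sat_eqFm F R heq h ρ d).mpr (hall d (List.mem_cons_of_mem _ hd))

/-- Over ℤ with polynomial arithmetic (`+` is function symbol `0`,
`×` is function symbol `1`, `=` is relation symbol `0`): for a finite system
`D = e :: es` of polynomial equations in `x₁,…,xₙ`, the po-history `{p₁(x₁),…,pₙ(xₙ)}`
potentially satisfies `∃x₁:p₁.⋯∃xₙ:pₙ. ψ(x₁,…,xₙ)` at index `1` iff `D` has an integer
solution. -/
theorem potsat_iff_diophantine (F : ℕ → List ℤ → ℤ) (R : ℕ → List ℤ → Bool)
    (hadd : ∀ a b : ℤ, F 0 [a, b] = a + b) (hmul : ∀ a b : ℤ, F 1 [a, b] = a * b)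
    (heq : ∀ a b : ℤ, R 0 [a, b] = true ↔ a = b)
    (n : ℕ) (e : Tm ℤ × Tm ℤ) (es : List (Tm ℤ × Tm ℤ))
    (hD : ∀ d ∈ e :: es, IsPolyTm n d.1 ∧ IsPolyTm n d.2) :
    PotSat F R (dioHistory n) 1 (exPrefix n (conjFm e es)) ↔
      ∃ σ : ℕ → ℤ, ∀ d ∈ e :: es, Tm.eval F σ d.1 = Tm.eval F σ d.2 := by
  constructor
  · rintro ⟨σ, hσ⟩
    have := (sat_exPrefix F R σ n (conjFm e es) n le_rfl σ).mp (hσ σ)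
    have hρ : (fun v => if 1 ≤ v ∧ v ≤ n then σ v else σ v) = σ := by
      funext v; split <;> rfl
    rw [hρ, sat_conj F R heq] at this
    exact ⟨σ, this⟩
  · rintro ⟨τ, hτ⟩
    refine ⟨τ, fun ρ => ?_⟩
    rw [sat_exPrefix F R τ n (conjFm e es) n le_rfl ρ, sat_conj F R heq]
    intro d hd
    have h1 : ∀ v, 1 ≤ v → v ≤ n →
        (fun v => if 1 ≤ v ∧ v ≤ n then τ v else ρ v) v = τ v := by
      intro v hv1 hv2; exact if_pos ⟨hv1, hv2⟩
    rw [eval_poly_congr F (hD d hd).1 h1, eval_poly_congr F (hD d hd).2 h1]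
    exact hτ d hd
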